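/- Let a_r, w_r, w_x be constants with 0 < w_r < a_r and 0 < w_x, and let σ > 0. Define the ring–line intersection area A_rl(r_c) = A(x₁, r_c + σw_r) − A(x₂, r_c + σw_r) − A(x₁, r_c − σw_r) + A(x₂, r_c − σw_r), where x₁ = x_c − σw_x and x₂ = x_c + σw_x. Suppose ψ = x_c/σ satisfies |ψ| + w_x < a_r − w_r. Then the derivative dA_rl/dr_c evaluated at r_c = σ·a_r equals σ·F(ψ), where F(ψ) = 2(a_r+w_r)[arccos((ψ−w_x)/(a_r+w_r)) − arccos((ψ+w_x)/(a_r+w_r))] − 2(a_r−w_r)[arccos((ψ−w_x)/(a_r−w_r)) − arccos((ψ+w_x)/(a_r−w_r))] does not depend on σ. Consequently the set of ratios ψ = x_c/σ at which this derivative vanishes is independent of σ, i.e., the ratio between the optimal ring scale and the width of an anisotropic (two parallel lines) feature is independent of the feature size (Proposition 1). -/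

import Mathlib

open Real Set

/-- Area of the circular segment of a disk of radius `r` cut off by
the vertical line at abscissa `x`. -/
noncomputable def A (x r : ℝ) : ℝ :=
  r ^ 2 * Real.arccos (x / r) - x * Real.sqrt (r ^ 2 - x ^ 2)

/-- Intersection area between the binary annulus with inner radius
`r_c - σ*w_r`, outer radius `r_c + σ*w_r`, and the binary strip between the
abscissae `x_c - σ*w_x` and `x_c + σ*w_x`. -/
noncomputable def Arl (a_r w_r w_x σ x_c : ℝ) (r_c : ℝ) : ℝ :=
  A (x_c - σ * w_x) (r_c + σ * w_r) - A (x_c + σ * w_x) (r_c + σ * w_r)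
    - A (x_c - σ * w_x) (r_c - σ * w_r) + A (x_c + σ * w_x) (r_c - σ * w_r)

/-- The σ-independent form of the derivative of the ring–line intersection
area with respect to the ring center radius, expressed in the ratio `ψ = x_c/σ`. -/
noncomputable def F (a_r w_r w_x ψ : ℝ) : ℝ :=
  2 * (a_r + w_r) * (Real.arccos ((ψ - w_x) / (a_r + w_r)) -
      Real.arccos ((ψ + w_x) / (a_r + w_r))) -
    2 * (a_r - w_r) * (Real.arccos ((ψ - w_x) / (a_r - w_r)) -
      Real.arccos ((ψ + w_x) / (a_r - w_r)))

lemma hasDerivAt_A (x r : ℝ) (h : |x| < r) :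
    HasDerivAt (A x) (2 * r * Real.arccos (x / r)) r := by
  unfold A
  have hr : 0 < r := (abs_nonneg x).trans_lt h
  have hx2 : x ^ 2 < r ^ 2 := by
    have := sq_lt_sq' (neg_lt_of_abs_lt h) (lt_of_abs_lt h)
    simpa using this
  have hu : |x / r| < 1 := by
    rw [abs_div, abs_of_pos hr]; exact (div_lt_one hr).2 h
  have hu1 : x / r ≠ 1 := by
    intro hc; rw [hc] at hu; simp at hu
  have hum1 : x / r ≠ -1 := by
    intro hc; rw [hc] at hu; simp at hu
  have hrx : (0:ℝ) < r ^ 2 - x ^ 2 := sub_pos.2 hx2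
  have hinv : HasDerivAt (fun t : ℝ => x / t) (x * -(r ^ 2)⁻¹) r := by
    simpa [div_eq_mul_inv] using (hasDerivAt_inv hr.ne').const_mul x
  have harc : HasDerivAt (fun t : ℝ => Real.arccos (x / t))
      (-(1 / Real.sqrt (1 - (x / r) ^ 2)) * (x * -(r ^ 2)⁻¹)) r :=
    (Real.hasDerivAt_arccos hum1 hu1).comp r hinv
  have hf1 : HasDerivAt (fun t : ℝ => t ^ 2 * Real.arccos (x / t))
      (2 * r ^ 1 * Real.arccos (x / r)
        + r ^ 2 * (-(1 / Real.sqrt (1 - (x / r) ^ 2)) * (x * -(r ^ 2)⁻¹))) r := by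
    simpa using (hasDerivAt_pow 2 r).fun_mul harc
  have hin : HasDerivAt (fun t : ℝ => t ^ 2 - x ^ 2) (2 * r) r := by
    simpa using ((hasDerivAt_pow 2 r).sub_const (x ^ 2))
  have hsq : HasDerivAt (fun t : ℝ => Real.sqrt (t ^ 2 - x ^ 2))
      (1 / (2 * Real.sqrt (r ^ 2 - x ^ 2)) * (2 * r)) r :=
    (Real.hasDerivAt_sqrt hrx.ne').comp r hin
  have hf2 : HasDerivAt (fun t : ℝ => x * Real.sqrt (t ^ 2 - x ^ 2))
      (x * (1 / (2 * Real.sqrt (r ^ 2 - x ^ 2)) * (2 * r))) r := hsq.const_mul x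
  have key : Real.sqrt (1 - (x / r) ^ 2) = Real.sqrt (r ^ 2 - x ^ 2) / r := by
    rw [show 1 - (x / r) ^ 2 = (r ^ 2 - x ^ 2) / r ^ 2 by field_simp,
      Real.sqrt_div hrx.le, Real.sqrt_sq hr.le]
  have hS : 0 < Real.sqrt (r ^ 2 - x ^ 2) := Real.sqrt_pos.2 hrx
  have := hf1.fun_sub hf2
  refine this.congr_deriv ?_
  rw [key]
  field_simp
  ring

theorem ring_line_ratio_independent_of_scale (a_r w_r w_x σ x_c : ℝ)
    (hw_r : 0 < w_r) (hwa : w_r < a_r) (hw_x : 0 < w_x) (hσ : 0 < σ)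
    (hψ : |x_c / σ| + w_x < a_r - w_r) :
    deriv (Arl a_r w_r w_x σ x_c) (σ * a_r) = σ * F a_r w_r w_x (x_c / σ) ∧
    (deriv (Arl a_r w_r w_x σ x_c) (σ * a_r) = 0 ↔ F a_r w_r w_x (x_c / σ) = 0) := by
  set x₁ := x_c - σ * w_x with hx₁
  set x₂ := x_c + σ * w_x with hx₂
  have hxc : |x_c| < σ * (a_r - w_r) - σ * w_x := by
    have : |x_c / σ| = |x_c| / σ := by rw [abs_div, abs_of_pos hσ]
    rw [this] at hψ
    have := (div_lt_iff₀ hσ).1 (by linarith : |x_c| / σ < a_r - w_r - w_x)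
    nlinarith
  have hb1 : |x₁| < σ * a_r - σ * w_r := by
    calc |x₁| ≤ |x_c| + |σ * w_x| := abs_sub _ _
    _ < σ * a_r - σ * w_r := by
        rw [abs_of_pos (by positivity : (0:ℝ) < σ * w_x)]; nlinarith
  have hb2 : |x₂| < σ * a_r - σ * w_r := by
    calc |x₂| ≤ |x_c| + |σ * w_x| := abs_add_le _ _
    _ < σ * a_r - σ * w_r := by
        rw [abs_of_pos (by positivity : (0:ℝ) < σ * w_x)]; nlinarith
  have hb1' : |x₁| < σ * a_r + σ * w_r := by nlinarith [abs_nonneg x₁]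
  have hb2' : |x₂| < σ * a_r + σ * w_r := by nlinarith [abs_nonneg x₂]
  have hshift1 : HasDerivAt (fun r_c : ℝ => r_c + σ * w_r) 1 (σ * a_r) :=
    (hasDerivAt_id _).add_const _
  have hshift2 : HasDerivAt (fun r_c : ℝ => r_c - σ * w_r) 1 (σ * a_r) :=
    (hasDerivAt_id _).sub_const _
  have h1 : HasDerivAt (fun r_c : ℝ => A x₁ (r_c + σ * w_r))
      (2 * (σ * a_r + σ * w_r) * Real.arccos (x₁ / (σ * a_r + σ * w_r)) * 1) (σ * a_r) :=
    (hasDerivAt_A x₁ _ hb1').comp (h₂ := A x₁) (σ * a_r) hshift1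
  have h2 : HasDerivAt (fun r_c : ℝ => A x₂ (r_c + σ * w_r))
      (2 * (σ * a_r + σ * w_r) * Real.arccos (x₂ / (σ * a_r + σ * w_r)) * 1) (σ * a_r) :=
    (hasDerivAt_A x₂ _ hb2').comp (h₂ := A x₂) (σ * a_r) hshift1
  have h3 : HasDerivAt (fun r_c : ℝ => A x₁ (r_c - σ * w_r))
      (2 * (σ * a_r - σ * w_r) * Real.arccos (x₁ / (σ * a_r - σ * w_r)) * 1) (σ * a_r) :=
    (hasDerivAt_A x₁ _ hb1).comp (h₂ := A x₁) (σ * a_r) hshift2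
  have h4 : HasDerivAt (fun r_c : ℝ => A x₂ (r_c - σ * w_r))
      (2 * (σ * a_r - σ * w_r) * Real.arccos (x₂ / (σ * a_r - σ * w_r)) * 1) (σ * a_r) :=
    (hasDerivAt_A x₂ _ hb2).comp (h₂ := A x₂) (σ * a_r) hshift2
  have hA : HasDerivAt (Arl a_r w_r w_x σ x_c)
      (2 * (σ * a_r + σ * w_r) * Real.arccos (x₁ / (σ * a_r + σ * w_r)) * 1
        - 2 * (σ * a_r + σ * w_r) * Real.arccos (x₂ / (σ * a_r + σ * w_r)) * 1
        - 2 * (σ * a_r - σ * w_r) * Real.arccos (x₁ / (σ * a_r - σ * w_r)) * 1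
        + 2 * (σ * a_r - σ * w_r) * Real.arccos (x₂ / (σ * a_r - σ * w_r)) * 1)
      (σ * a_r) := ((h1.sub h2).sub h3).add h4
  have hsum : a_r + w_r ≠ 0 := by nlinarith
  have hdiff : a_r - w_r ≠ 0 := by nlinarith
  have e1 : x₁ / (σ * a_r + σ * w_r) = (x_c / σ - w_x) / (a_r + w_r) := by
    rw [hx₁, show σ * a_r + σ * w_r = σ * (a_r + w_r) by ring]
    field_simp
    try ring
  have e2 : x₂ / (σ * a_r + σ * w_r) = (x_c / σ + w_x) / (a_r + w_r) := by
    rw [hx₂, show σ * a_r + σ * w_r = σ * (a_r + w_r) by ring]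
    field_simp
    try ring
  have e3 : x₁ / (σ * a_r - σ * w_r) = (x_c / σ - w_x) / (a_r - w_r) := by
    rw [hx₁, show σ * a_r - σ * w_r = σ * (a_r - w_r) by ring]
    field_simp
    try ring
  have e4 : x₂ / (σ * a_r - σ * w_r) = (x_c / σ + w_x) / (a_r - w_r) := by
    rw [hx₂, show σ * a_r - σ * w_r = σ * (a_r - w_r) by ring]
    field_simp
    try ring
  have hd : deriv (Arl a_r w_r w_x σ x_c) (σ * a_r) = σ * F a_r w_r w_x (x_c / σ) := by
    rw [hA.deriv, e1, e2, e3, e4, F]; ring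
  exact ⟨hd, by rw [hd]; simp [hσ.ne']⟩
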